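/- Trigonometric Lamé identity: fix z ∈ ℂ with sinh z ≠ 0 and set c = coth z = cosh z / sinh z. Define Φ(x) = (coth x − c)·exp(c·x). Then for every x ∈ ℂ with sinh x ≠ 0 the second complex derivative of Φ satisfies Φ''(x) − (2/sinh²x)·Φ(x) = c²·Φ(x). -/

import Mathlib

private lemma hasDerivAt_exp_cw (c x : ℂ) :
    HasDerivAt (fun w : ℂ => Complex.exp (c * w)) (c * Complex.exp (c * x)) x := by
  have h := (Complex.hasDerivAt_exp (c * x)).comp x ((hasDerivAt_id x).const_mul c)
  simpa [mul_comm, Function.comp_def] using h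

private lemma hasDerivAt_Phi (c : ℂ) {w : ℂ} (hw : Complex.sinh w ≠ 0) :
    HasDerivAt (fun w : ℂ => (Complex.cosh w / Complex.sinh w - c) * Complex.exp (c * w))
      ((-(1 / Complex.sinh w ^ 2) + c * (Complex.cosh w / Complex.sinh w) - c ^ 2)
        * Complex.exp (c * w)) w := by
  have h1 : HasDerivAt (fun w : ℂ => Complex.cosh w / Complex.sinh w - c)
      ((Complex.sinh w * Complex.sinh w - Complex.cosh w * Complex.cosh w)
        / Complex.sinh w ^ 2) w :=
    ((Complex.hasDerivAt_cosh w).div (Complex.hasDerivAt_sinh w) hw).sub_const c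
  have key : Complex.sinh w * Complex.sinh w - Complex.cosh w * Complex.cosh w = -1 := by
    linear_combination -(Complex.cosh_sq_sub_sinh_sq w)
  rw [key] at h1
  have h := h1.mul (hasDerivAt_exp_cw c w)
  convert h using 1
  · rfl
  · rfl
  · rfl
  field_simp
  ring

private lemma hasDerivAt_g (c : ℂ) {x : ℂ} (hx : Complex.sinh x ≠ 0) :
    HasDerivAt (fun w : ℂ =>
        (-(1 / Complex.sinh w ^ 2) + c * (Complex.cosh w / Complex.sinh w) - c ^ 2)
          * Complex.exp (c * w))
      ((2 * Complex.cosh x / Complex.sinh x ^ 3 - c / Complex.sinh x ^ 2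
          + c * (-(1 / Complex.sinh x ^ 2) + c * (Complex.cosh x / Complex.sinh x) - c ^ 2))
        * Complex.exp (c * x)) x := by
  have hx2 : Complex.sinh x ^ 2 ≠ 0 := pow_ne_zero _ hx
  have hpow : HasDerivAt (fun w : ℂ => Complex.sinh w ^ 2)
      (2 * Complex.sinh x ^ 1 * Complex.cosh x) x := (Complex.hasDerivAt_sinh x).pow 2
  have hinv : HasDerivAt (fun w : ℂ => 1 / Complex.sinh w ^ 2)
      ((0 * Complex.sinh x ^ 2 - 1 * (2 * Complex.sinh x ^ 1 * Complex.cosh x))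
        / (Complex.sinh x ^ 2) ^ 2) x := (hasDerivAt_const x 1).div hpow hx2
  have hcoth : HasDerivAt (fun w : ℂ => Complex.cosh w / Complex.sinh w)
      ((Complex.sinh x * Complex.sinh x - Complex.cosh x * Complex.cosh x)
        / Complex.sinh x ^ 2) x :=
    (Complex.hasDerivAt_cosh x).div (Complex.hasDerivAt_sinh x) hx
  have key : Complex.sinh x * Complex.sinh x - Complex.cosh x * Complex.cosh x = -1 := by
    linear_combination -(Complex.cosh_sq_sub_sinh_sq x)
  rw [key] at hcoth
  have h := ((hinv.neg.add (hcoth.const_mul c)).sub_const (c ^ 2)).mul (hasDerivAt_exp_cw c x)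
  convert h using 1
  · rfl
  · rfl
  · rfl
  simp only [Pi.add_apply, Pi.neg_apply]
  field_simp
  ring

/-- Trigonometric limit of the Lamé equation: with `c = coth z` and
`Φ(x) = (coth x − c)·e^{c·x}` one has `Φ''(x) − (2/sinh²x)Φ(x) = c²Φ(x)`
whenever `sinh x ≠ 0`. -/
theorem trigonometric_lame_identity (z : ℂ) (hz : Complex.sinh z ≠ 0) :
    ∀ x : ℂ, Complex.sinh x ≠ 0 →
      deriv (deriv (fun w : ℂ =>
          (Complex.cosh w / Complex.sinh w - Complex.cosh z / Complex.sinh z)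
            * Complex.exp (Complex.cosh z / Complex.sinh z * w))) x
        - (2 / Complex.sinh x ^ 2) *
            ((Complex.cosh x / Complex.sinh x - Complex.cosh z / Complex.sinh z)
              * Complex.exp (Complex.cosh z / Complex.sinh z * x))
      = (Complex.cosh z / Complex.sinh z) ^ 2 *
          ((Complex.cosh x / Complex.sinh x - Complex.cosh z / Complex.sinh z)
            * Complex.exp (Complex.cosh z / Complex.sinh z * x)) := by
  intro x hx
  set c := Complex.cosh z / Complex.sinh z with hc
  have hev : ∀ᶠ w in nhds x, Complex.sinh w ≠ 0 :=
    Complex.continuous_sinh.continuousAt.eventually_ne hx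
  have hEq : deriv (fun w : ℂ => (Complex.cosh w / Complex.sinh w - c) * Complex.exp (c * w))
      =ᶠ[nhds x] fun w =>
        (-(1 / Complex.sinh w ^ 2) + c * (Complex.cosh w / Complex.sinh w) - c ^ 2)
          * Complex.exp (c * w) :=
    hev.mono fun w hw => (hasDerivAt_Phi c hw).deriv
  rw [hEq.deriv_eq, (hasDerivAt_g c hx).deriv]
  have h11 : Complex.sinh x ^ 11 * (Complex.sinh x)⁻¹ ^ 11 = 1 := by
    rw [← mul_pow, mul_inv_cancel₀ hx, one_pow]
  field_simp
  ring
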